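/- arXiv:2207.06687 — 3 statements merged into one kernel-verified Lean document; each statement's English description precedes it below -/
import Mathlib

section
/- For the empirical risk R_emp and population risk R_pop, sup over all Q with Q_Y=P_Y and Q_{X|Y,Z}=P_{X|Y,Z} of |R_emp(f,P) − R_pop(f,Q)| is at most |R_emp(f,P) − R_pop(f,P)| + CSV(f). -/
open scoped ENNReal

private lemma stmt2_div_mul_aux {a b l : ℝ} (hb : b ≠ 0) : a / b * (b * l) = a * l := by
  field_simp

private lemma stmt2_tsum_ite {α : Type*} [DecidableEq α] (g : α → ℝ≥0∞) (a : α) :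
    (∑' b : α, if a = b then g b else 0) = g a := by
  rw [tsum_eq_single a (fun w hw => if_neg fun h => hw h.symm)]
  simp

/-- for every `Q` with `Q_Y = P_Y` and `Q_{X∣Y,Z} = P_{X∣Y,Z}`,
`|R_emp(f,P) − R_pop(f,Q)| ≤ |R_emp(f,P) − R_pop(f,P)| + CSV(f)`;
i.e. the supremum over such `Q` of the OOD generalization error is bounded by
the in-distribution generalization error plus the CSV. -/
theorem stmt2 {𝒳 𝒴 𝒵 Ω : Type*} [Fintype 𝒴] [Fintype 𝒵] [Nonempty 𝒵]
    (P Q : PMF (𝒳 × 𝒴 × 𝒵)) (f : 𝒳 → Ω) (𝓛 : Ω → 𝒴 → ℝ) (M : ℝ)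
    (hnonneg : ∀ w y, 0 ≤ 𝓛 w y) (hbound : ∀ w y, 𝓛 w y ≤ M)
    (hpos : ∀ y z, 0 < (P.map (fun p => p.2)) (y, z))
    -- Q_Y = P_Y
    (hY : P.map (fun p => p.2.1) = Q.map (fun p => p.2.1))
    -- Q_{X∣Y,Z} = P_{X∣Y,Z} (in cross-multiplied form)
    (hXYZ : ∀ x y z,
      P (x, y, z) * (Q.map (fun p => p.2)) (y, z)
        = Q (x, y, z) * (P.map (fun p => p.2)) (y, z))
    -- n training samples, giving the empirical risk
    (n : ℕ) (hn : 0 < n) (sample : Fin n → 𝒳 × 𝒴)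
    (Remp : ℝ)
    (hRemp : Remp = (∑ i : Fin n, 𝓛 (f (sample i).1) (sample i).2) / n)
    -- L y z = E[𝓛(f(X),Y) ∣ Y = y, Z = z]
    (L : 𝒴 → 𝒵 → ℝ)
    (hL : ∀ y z, L y z
      = (∑' x : 𝒳, (P (x, y, z)).toReal * 𝓛 (f x) y)
          / ((P.map (fun p => p.2)) (y, z)).toReal) :
    |Remp - ∑' p : 𝒳 × 𝒴 × 𝒵, (Q p).toReal * 𝓛 (f p.1) p.2.1|
      ≤ |Remp - ∑' p : 𝒳 × 𝒴 × 𝒵, (P p).toReal * 𝓛 (f p.1) p.2.1|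
        + ∑ y : 𝒴, ((P.map (fun p => p.2.1)) y).toReal
            * ⨆ z₁ : 𝒵, ⨆ z₂ : 𝒵, (L y z₁ - L y z₂) := by
  classical
  -- basic finiteness facts
  have hfin : ∀ (R : PMF (𝒳 × 𝒴 × 𝒵)) (w : 𝒴 × 𝒵),
      (R.map (fun p => p.2)) w ≠ ∞ := fun R w => PMF.apply_ne_top _ w
  -- fiber formula for the (Y,Z)-marginal
  have hfiber : ∀ (R : PMF (𝒳 × 𝒴 × 𝒵)) (y : 𝒴) (z : 𝒵),
      (R.map (fun p => p.2)) (y, z) = ∑' x : 𝒳, R (x, y, z) := by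
    intro R y z
    rw [PMF.map_apply, ENNReal.tsum_prod']
    refine tsum_congr fun x => ?_
    exact (tsum_eq_single (y, z) fun w hw => if_neg fun h => hw h.symm).trans (if_pos rfl)
  -- the Y marginal is the sum over z of the (Y,Z)-marginal
  have hmarg : ∀ (R : PMF (𝒳 × 𝒴 × 𝒵)) (y : 𝒴),
      (R.map (fun p => p.2.1)) y = ∑ z : 𝒵, (R.map (fun p => p.2)) (y, z) := by
    intro R y
    have hcomp : (fun p : 𝒳 × 𝒴 × 𝒵 => p.2.1) = Prod.fst ∘ (fun p => p.2) := rfl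
    rw [hcomp, ← PMF.map_comp, PMF.map_apply, tsum_fintype]
    rw [Fintype.sum_prod_type]
    simp
  -- summability
  have hCsum : ∀ (R : PMF (𝒳 × 𝒴 × 𝒵)),
      Summable (fun p : 𝒳 × 𝒴 × 𝒵 => (R p).toReal) := fun R =>
    ENNReal.summable_toReal (by rw [R.tsum_coe]; exact ENNReal.one_ne_top)
  have hsum : ∀ (R : PMF (𝒳 × 𝒴 × 𝒵)),
      Summable (fun p : 𝒳 × 𝒴 × 𝒵 => (R p).toReal * 𝓛 (f p.1) p.2.1) := by
    intro R
    refine Summable.of_nonneg_of_le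
      (fun p => mul_nonneg ENNReal.toReal_nonneg (hnonneg _ _))
      (fun p => ?_) ((hCsum R).mul_right (max M 0))
    exact mul_le_mul_of_nonneg_left ((hbound _ _).trans (le_max_left _ _))
      ENNReal.toReal_nonneg
  have hsum_fib : ∀ (R : PMF (𝒳 × 𝒴 × 𝒵)) (y : 𝒴) (z : 𝒵),
      Summable (fun x : 𝒳 => (R (x, y, z)).toReal * 𝓛 (f x) y) := by
    intro R y z
    have hinj : Function.Injective (fun x : 𝒳 => ((x, y, z) : 𝒳 × 𝒴 × 𝒵)) := by
      intro a b h; simpa using h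
    exact (hsum R).comp_injective hinj
  -- decomposition of the population risk
  have hdecomp : ∀ (R : PMF (𝒳 × 𝒴 × 𝒵)),
      (∑' p : 𝒳 × 𝒴 × 𝒵, (R p).toReal * 𝓛 (f p.1) p.2.1)
        = ∑ w : 𝒴 × 𝒵, ∑' x : 𝒳, (R (x, w.1, w.2)).toReal * 𝓛 (f x) w.1 := by
    intro R
    rw [Summable.tsum_prod' (hsum R) (hsum R).prod_factor]
    have : ∀ x : 𝒳, (∑' w : 𝒴 × 𝒵, (R (x, w)).toReal * 𝓛 (f x) w.1)
        = ∑ w : 𝒴 × 𝒵, (R (x, w.1, w.2)).toReal * 𝓛 (f x) w.1 := by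
      intro x; rw [tsum_fintype]
    rw [tsum_congr this]
    exact Summable.tsum_finsetSum (fun w _ => hsum_fib R w.1 w.2)
  -- P fiber sum
  have h0 : ∀ (y : 𝒴) (z : 𝒵), ((P.map (fun p => p.2)) (y, z)).toReal ≠ 0 := by
    intro y z
    exact ENNReal.toReal_ne_zero.mpr ⟨(hpos y z).ne', hfin P (y, z)⟩
  have hPfib : ∀ (y : 𝒴) (z : 𝒵),
      (∑' x : 𝒳, (P (x, y, z)).toReal * 𝓛 (f x) y)
        = ((P.map (fun p => p.2)) (y, z)).toReal * L y z := by
    intro y z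
    rw [hL y z, mul_div_cancel₀ _ (h0 y z)]
  -- Q fiber sum
  have hQfib : ∀ (y : 𝒴) (z : 𝒵),
      (∑' x : 𝒳, (Q (x, y, z)).toReal * 𝓛 (f x) y)
        = ((Q.map (fun p => p.2)) (y, z)).toReal * L y z := by
    intro y z
    have hq : ∀ x : 𝒳, (Q (x, y, z)).toReal
        = (P (x, y, z)).toReal * ((Q.map (fun p => p.2)) (y, z)).toReal
            / ((P.map (fun p => p.2)) (y, z)).toReal := by
      intro x
      have h := congrArg ENNReal.toReal (hXYZ x y z)
      rw [ENNReal.toReal_mul, ENNReal.toReal_mul] at h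
      rw [eq_div_iff (h0 y z)]
      linarith [h]
    calc (∑' x : 𝒳, (Q (x, y, z)).toReal * 𝓛 (f x) y)
        = ∑' x : 𝒳, (((Q.map (fun p => p.2)) (y, z)).toReal
            / ((P.map (fun p => p.2)) (y, z)).toReal)
            * ((P (x, y, z)).toReal * 𝓛 (f x) y) := by
          refine tsum_congr fun x => ?_
          rw [hq x]; ring
      _ = (((Q.map (fun p => p.2)) (y, z)).toReal
            / ((P.map (fun p => p.2)) (y, z)).toReal)
            * ∑' x : 𝒳, (P (x, y, z)).toReal * 𝓛 (f x) y := tsum_mul_left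
      _ = ((Q.map (fun p => p.2)) (y, z)).toReal * L y z := by
          rw [hPfib y z]
          exact stmt2_div_mul_aux (h0 y z)
  -- row sums of the marginals
  have hrowP : ∀ y : 𝒴, (∑ z : 𝒵, ((P.map (fun p => p.2)) (y, z)).toReal)
      = ((P.map (fun p => p.2.1)) y).toReal := by
    intro y
    rw [hmarg P y, ENNReal.toReal_sum (fun z _ => hfin P (y, z))]
  have hrowQ : ∀ y : 𝒴, (∑ z : 𝒵, ((Q.map (fun p => p.2)) (y, z)).toReal)
      = ((P.map (fun p => p.2.1)) y).toReal := by
    intro y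
    rw [hY, hmarg Q y, ENNReal.toReal_sum (fun z _ => hfin Q (y, z))]
  -- per-y bound
  have per_y : ∀ y : 𝒴,
      |∑ z : 𝒵, (((P.map (fun p => p.2)) (y, z)).toReal
          - ((Q.map (fun p => p.2)) (y, z)).toReal) * L y z|
        ≤ ((P.map (fun p => p.2.1)) y).toReal
            * ⨆ z₁ : 𝒵, ⨆ z₂ : 𝒵, (L y z₁ - L y z₂) := by
    intro y
    obtain ⟨zM, -, hzM⟩ := Finset.exists_max_image Finset.univ (L y) Finset.univ_nonempty
    obtain ⟨zm, -, hzm⟩ := Finset.exists_min_image Finset.univ (L y) Finset.univ_nonempty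
    have hPY0 : (0:ℝ) ≤ ((P.map (fun p => p.2.1)) y).toReal := ENNReal.toReal_nonneg
    have hS : L y zM - L y zm ≤ ⨆ z₁ : 𝒵, ⨆ z₂ : 𝒵, (L y z₁ - L y z₂) := by
      have hin : L y zM - L y zm ≤ ⨆ z₂ : 𝒵, (L y zM - L y z₂) :=
        le_ciSup (Set.Finite.bddAbove (Set.finite_range fun z₂ => L y zM - L y z₂)) zm
      exact le_ciSup_of_le
        (Set.Finite.bddAbove (Set.finite_range fun z₁ => ⨆ z₂ : 𝒵, (L y z₁ - L y z₂))) zM hin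
    have h1 : ∑ z : 𝒵, ((P.map (fun p => p.2)) (y, z)).toReal * L y z
        ≤ ((P.map (fun p => p.2.1)) y).toReal * L y zM := by
      rw [← hrowP y, Finset.sum_mul]
      exact Finset.sum_le_sum fun z _ =>
        mul_le_mul_of_nonneg_left (hzM z (Finset.mem_univ z)) ENNReal.toReal_nonneg
    have h2 : ((P.map (fun p => p.2.1)) y).toReal * L y zm
        ≤ ∑ z : 𝒵, ((P.map (fun p => p.2)) (y, z)).toReal * L y z := by
      rw [← hrowP y, Finset.sum_mul]
      exact Finset.sum_le_sum fun z _ =>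
        mul_le_mul_of_nonneg_left (hzm z (Finset.mem_univ z)) ENNReal.toReal_nonneg
    have h3 : ∑ z : 𝒵, ((Q.map (fun p => p.2)) (y, z)).toReal * L y z
        ≤ ((P.map (fun p => p.2.1)) y).toReal * L y zM := by
      rw [← hrowQ y, Finset.sum_mul]
      exact Finset.sum_le_sum fun z _ =>
        mul_le_mul_of_nonneg_left (hzM z (Finset.mem_univ z)) ENNReal.toReal_nonneg
    have h4 : ((P.map (fun p => p.2.1)) y).toReal * L y zm
        ≤ ∑ z : 𝒵, ((Q.map (fun p => p.2)) (y, z)).toReal * L y z := by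
      rw [← hrowQ y, Finset.sum_mul]
      exact Finset.sum_le_sum fun z _ =>
        mul_le_mul_of_nonneg_left (hzm z (Finset.mem_univ z)) ENNReal.toReal_nonneg
    have hsplit : ∑ z : 𝒵, (((P.map (fun p => p.2)) (y, z)).toReal
          - ((Q.map (fun p => p.2)) (y, z)).toReal) * L y z
        = (∑ z : 𝒵, ((P.map (fun p => p.2)) (y, z)).toReal * L y z)
          - ∑ z : 𝒵, ((Q.map (fun p => p.2)) (y, z)).toReal * L y z := by
      rw [← Finset.sum_sub_distrib]
      exact Finset.sum_congr rfl fun z _ => by ring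
    have hPS : ((P.map (fun p => p.2.1)) y).toReal * L y zM
          - ((P.map (fun p => p.2.1)) y).toReal * L y zm
        ≤ ((P.map (fun p => p.2.1)) y).toReal
            * ⨆ z₁ : 𝒵, ⨆ z₂ : 𝒵, (L y z₁ - L y z₂) := by
      have := mul_le_mul_of_nonneg_left hS hPY0
      rw [mul_sub] at this
      exact this
    rw [hsplit, abs_le]
    constructor
    · linarith [h2, h3, hPS]
    · linarith [h1, h4, hPS]
  -- the population risks, grouped by y
  have hgroup : ∀ (R : PMF (𝒳 × 𝒴 × 𝒵)),
      (∀ y z, (∑' x : 𝒳, (R (x, y, z)).toReal * 𝓛 (f x) y)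
        = ((R.map (fun p => p.2)) (y, z)).toReal * L y z) →
      (∑' p : 𝒳 × 𝒴 × 𝒵, (R p).toReal * 𝓛 (f p.1) p.2.1)
        = ∑ y : 𝒴, ∑ z : 𝒵, ((R.map (fun p => p.2)) (y, z)).toReal * L y z := by
    intro R hfib
    rw [hdecomp R, Fintype.sum_prod_type]
    exact Finset.sum_congr rfl fun y _ => Finset.sum_congr rfl fun z _ => hfib y z
  have hRP := hgroup P hPfib
  have hRQ := hgroup Q hQfib
  -- main difference bound
  have hdiff : |(∑' p : 𝒳 × 𝒴 × 𝒵, (P p).toReal * 𝓛 (f p.1) p.2.1)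
        - ∑' p : 𝒳 × 𝒴 × 𝒵, (Q p).toReal * 𝓛 (f p.1) p.2.1|
      ≤ ∑ y : 𝒴, ((P.map (fun p => p.2.1)) y).toReal
          * ⨆ z₁ : 𝒵, ⨆ z₂ : 𝒵, (L y z₁ - L y z₂) := by
    rw [hRP, hRQ, ← Finset.sum_sub_distrib]
    refine (Finset.abs_sum_le_sum_abs _ _).trans ?_
    refine Finset.sum_le_sum fun y _ => ?_
    rw [← Finset.sum_sub_distrib]
    have heq : ∑ z : 𝒵, (((P.map (fun p => p.2)) (y, z)).toReal * L y z
          - ((Q.map (fun p => p.2)) (y, z)).toReal * L y z)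
        = ∑ z : 𝒵, (((P.map (fun p => p.2)) (y, z)).toReal
            - ((Q.map (fun p => p.2)) (y, z)).toReal) * L y z :=
      Finset.sum_congr rfl fun z _ => by ring
    rw [heq]
    exact per_y y
  -- conclude by the triangle inequality
  have htri : |Remp - ∑' p : 𝒳 × 𝒴 × 𝒵, (Q p).toReal * 𝓛 (f p.1) p.2.1|
      ≤ |Remp - ∑' p : 𝒳 × 𝒴 × 𝒵, (P p).toReal * 𝓛 (f p.1) p.2.1|
        + |(∑' p : 𝒳 × 𝒴 × 𝒵, (P p).toReal * 𝓛 (f p.1) p.2.1)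
            - ∑' p : 𝒳 × 𝒴 × 𝒵, (Q p).toReal * 𝓛 (f p.1) p.2.1| := by
    have := abs_sub_le Remp (∑' p : 𝒳 × 𝒴 × 𝒵, (P p).toReal * 𝓛 (f p.1) p.2.1)
      (∑' p : 𝒳 × 𝒴 × 𝒵, (Q p).toReal * 𝓛 (f p.1) p.2.1)
    exact this
  exact htri.trans (by linarith)
end

section
/- Let V be a real random variable with distribution P = Σ_{k=1}^{K} π_k P_k, where each P_k is absolutely continuous with respect to Lebesgue measure and π_k ≥ c > 0 for all k. Then E_P[V | V ≥ q_P(1−c)] − E_P[V | V ≤ q_P(c)] ≥ max_k E_{P_k}[V] − min_k E_{P_k}[V], where q_P(s) = inf{p : P(V ≤ p) ≥ s} is the quantile function. -/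
open MeasureTheory
open scoped ENNReal

open Filter Topology Set


lemma aux_tail_upper (P : Measure ℝ) [IsProbabilityMeasure P] (μ : Measure ℝ)
    (hPint : Integrable id P) (t : ℝ) (hμ : μ ≤ P)
    (hmass : μ Set.univ = P (Set.Ici t)) :
    ∫ v, v ∂μ ≤ ∫ v in Set.Ici t, v ∂P := by
  haveI : IsFiniteMeasure μ := isFiniteMeasure_of_le P hμ
  have hidP : Integrable (fun v : ℝ => v) P := hPint
  have hidμ : Integrable (fun v : ℝ => v) μ := hPint.mono_measure hμ
  have hsubP : Integrable (fun v => v - t) P := hidP.sub (integrable_const t)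
  have hsubμ : Integrable (fun v => v - t) μ := hidμ.sub (integrable_const t)
  have hfP : Integrable (fun v => max (v - t) 0) P := hsubP.pos_part
  have hfμ : Integrable (fun v => max (v - t) 0) μ := hfP.mono_measure hμ
  have h1 : ∫ v in Set.Ici t, v ∂P
      = (∫ v in Set.Ici t, max (v - t) 0 ∂P) + (P (Set.Ici t)).toReal * t := by
    have e1 : ∫ v in Set.Ici t, v ∂P = ∫ v in Set.Ici t, (max (v - t) 0 + t) ∂P := by
      refine setIntegral_congr_fun measurableSet_Ici fun v hv => ?_
      have hv' : (t : ℝ) ≤ v := hv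
      simp [max_eq_left (sub_nonneg.2 hv')]
    rw [e1, integral_add (hfP.restrict) (integrable_const t).restrict, setIntegral_const,
      smul_eq_mul, measureReal_def]
  have h2 : ∫ v in Set.Ici t, max (v - t) 0 ∂P = ∫ v, max (v - t) 0 ∂P := by
    have hsplit := integral_add_compl (measurableSet_Ici (a := t)) hfP
    rw [Set.compl_Ici] at hsplit
    have hz : ∫ v in Set.Iio t, max (v - t) 0 ∂P = 0 :=
      setIntegral_eq_zero_of_forall_eq_zero fun x hx => by
        have hx' : x < t := hx
        simp [max_eq_right (sub_nonpos.2 hx'.le)]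
    linarith [hsplit, hz]
  have h3 : ∫ v, max (v - t) 0 ∂μ ≤ ∫ v, max (v - t) 0 ∂P :=
    integral_mono_measure hμ (Eventually.of_forall fun x => le_max_right _ _) hfP
  have h4 : ∫ v, (v - t) ∂μ ≤ ∫ v, max (v - t) 0 ∂μ :=
    integral_mono hsubμ hfμ fun x => le_max_left _ _
  have h5 : ∫ v, (v - t) ∂μ = (∫ v, v ∂μ) - (μ Set.univ).toReal * t := by
    rw [integral_sub hidμ (integrable_const t), integral_const, smul_eq_mul, measureReal_def]
  rw [hmass] at h5
  linarith

lemma aux_tail_lower (P : Measure ℝ) [IsProbabilityMeasure P] (μ : Measure ℝ)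
    (hPint : Integrable id P) (t : ℝ) (hμ : μ ≤ P)
    (hmass : μ Set.univ = P (Set.Iic t)) :
    ∫ v in Set.Iic t, v ∂P ≤ ∫ v, v ∂μ := by
  haveI : IsFiniteMeasure μ := isFiniteMeasure_of_le P hμ
  have hidP : Integrable (fun v : ℝ => v) P := hPint
  have hidμ : Integrable (fun v : ℝ => v) μ := hPint.mono_measure hμ
  have hsubP : Integrable (fun v => t - v) P := (integrable_const t).sub hidP
  have hsubμ : Integrable (fun v => t - v) μ := (integrable_const t).sub hidμ
  have hfP : Integrable (fun v => max (t - v) 0) P := hsubP.pos_part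
  have hfμ : Integrable (fun v => max (t - v) 0) μ := hfP.mono_measure hμ
  have h1 : ∫ v in Set.Iic t, v ∂P
      = (P (Set.Iic t)).toReal * t - ∫ v in Set.Iic t, max (t - v) 0 ∂P := by
    have e1 : ∫ v in Set.Iic t, v ∂P = ∫ v in Set.Iic t, (t - max (t - v) 0) ∂P := by
      refine setIntegral_congr_fun measurableSet_Iic fun v hv => ?_
      have hv' : v ≤ t := hv
      simp [max_eq_left (sub_nonneg.2 hv')]
    rw [e1, integral_sub (integrable_const t).restrict (hfP.restrict), setIntegral_const,
      smul_eq_mul, measureReal_def]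
  have h2 : ∫ v in Set.Iic t, max (t - v) 0 ∂P = ∫ v, max (t - v) 0 ∂P := by
    have hsplit := integral_add_compl (measurableSet_Iic (a := t)) hfP
    rw [Set.compl_Iic] at hsplit
    have hz : ∫ v in Set.Ioi t, max (t - v) 0 ∂P = 0 :=
      setIntegral_eq_zero_of_forall_eq_zero fun x hx => by
        have hx' : t < x := hx
        simp [max_eq_right (sub_nonpos.2 hx'.le)]
    linarith [hsplit, hz]
  have h3 : ∫ v, max (t - v) 0 ∂μ ≤ ∫ v, max (t - v) 0 ∂P :=
    integral_mono_measure hμ (Eventually.of_forall fun x => le_max_right _ _) hfP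
  have h4 : ∫ v, (t - v) ∂μ ≤ ∫ v, max (t - v) 0 ∂μ :=
    integral_mono hsubμ hfμ fun x => le_max_left _ _
  have h5 : ∫ v, (t - v) ∂μ = (μ Set.univ).toReal * t - ∫ v, v ∂μ := by
    rw [integral_sub (integrable_const t) hidμ, integral_const, smul_eq_mul, measureReal_def]
  rw [hmass] at h5
  linarith

/-- The set `{p | s ≤ F p}` is bounded below when `s > 0`. -/
lemma aux_bddBelow (P : Measure ℝ) [IsProbabilityMeasure P] (s : ℝ) (hs0 : 0 < s) :
    BddBelow {p : ℝ | s ≤ (P (Set.Iic p)).toReal} := by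
  have hinter : (⋂ n : ℕ, Set.Iic (-(n : ℝ))) = ∅ := by
    ext x
    simp only [Set.mem_iInter, Set.mem_Iic, Set.mem_empty_iff_false, iff_false, not_forall]
    obtain ⟨n, hn⟩ := exists_nat_gt (-x)
    exact ⟨n, by push_neg; linarith⟩
  have hanti : Antitone fun n : ℕ => Set.Iic (-(n : ℝ)) := fun m n hmn =>
    Set.Iic_subset_Iic.2 (by exact_mod_cast neg_le_neg (by exact_mod_cast hmn))
  have hm := hanti.measure_iInter (μ := P)
    (fun n => (measurableSet_Iic).nullMeasurableSet) ⟨0, measure_ne_top _ _⟩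
  rw [hinter, measure_empty] at hm
  have hlt : (⨅ n : ℕ, P (Set.Iic (-(n : ℝ)))) < ENNReal.ofReal s := by
    rw [← hm]; exact ENNReal.ofReal_pos.2 hs0
  obtain ⟨n, hn⟩ := iInf_lt_iff.1 hlt
  refine ⟨-(n : ℝ), fun p hp => ?_⟩
  by_contra hlt'
  push_neg at hlt'
  have : P (Set.Iic p) < ENNReal.ofReal s :=
    lt_of_le_of_lt (measure_mono (Set.Iic_subset_Iic.2 hlt'.le)) hn
  have : (P (Set.Iic p)).toReal < s :=
    (ENNReal.lt_ofReal_iff_toReal_lt (measure_ne_top _ _)).1 this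
  exact absurd hp (by simp only [Set.mem_setOf_eq]; linarith)

/-- Lower bound half: `ofReal s ≤ P (Iic (sInf S))` when `S` nonempty and bddBelow. -/
lemma aux_ge (P : Measure ℝ) [IsProbabilityMeasure P] (s : ℝ)
    (hne : {p : ℝ | s ≤ (P (Set.Iic p)).toReal}.Nonempty) :
    ENNReal.ofReal s ≤ P (Set.Iic (sInf {p : ℝ | s ≤ (P (Set.Iic p)).toReal})) := by
  set S := {p : ℝ | s ≤ (P (Set.Iic p)).toReal} with hS
  set b := sInf S with hb
  have hIic : Set.Iic b = ⋂ n : ℕ, Set.Iic (b + ((n : ℝ) + 1)⁻¹) := by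
    ext x
    simp only [Set.mem_Iic, Set.mem_iInter]
    constructor
    · intro h n
      have : (0 : ℝ) < (n : ℝ) + 1 := by positivity
      linarith [inv_pos.2 this]
    · intro h
      by_contra hx
      push_neg at hx
      obtain ⟨n, hn⟩ := exists_nat_one_div_lt (sub_pos.2 hx)
      have := h n
      rw [one_div] at hn
      linarith
  have hanti : Antitone fun n : ℕ => Set.Iic (b + ((n : ℝ) + 1)⁻¹) := by
    intro m n hmn
    refine Set.Iic_subset_Iic.2 (by gcongr)
  have hm := hanti.measure_iInter (μ := P)
    (fun n => (measurableSet_Iic).nullMeasurableSet) ⟨0, measure_ne_top _ _⟩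
  rw [← hIic] at hm
  rw [hm]
  refine le_iInf fun n => ?_
  have hpos : (0 : ℝ) < ((n : ℝ) + 1)⁻¹ := by positivity
  obtain ⟨x, hxS, hxlt⟩ := exists_lt_of_csInf_lt hne (show b < b + ((n : ℝ) + 1)⁻¹ by linarith)
  calc ENNReal.ofReal s ≤ P (Set.Iic x) := ENNReal.ofReal_le_of_le_toReal hxS
    _ ≤ P (Set.Iic (b + ((n : ℝ) + 1)⁻¹)) := measure_mono (Set.Iic_subset_Iic.2 hxlt.le)

/-- Quantile identity for `s ∈ (0,1)` and atomless `P`. -/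
lemma aux_quant (P : Measure ℝ) [IsProbabilityMeasure P] [NullSingletonClass P]
    (s : ℝ) (hs0 : 0 < s) (hs1 : s < 1) :
    P (Set.Iic (sInf {p : ℝ | s ≤ (P (Set.Iic p)).toReal})) = ENNReal.ofReal s := by
  set S := {p : ℝ | s ≤ (P (Set.Iic p)).toReal} with hS
  set b := sInf S with hb
  have hbdd : BddBelow S := aux_bddBelow P s hs0
  have hne : S.Nonempty := by
    have htop : Tendsto (fun x : ℝ => P (Set.Iic x)) atTop (𝓝 (P Set.univ)) :=
      tendsto_measure_Iic_atTop P
    rw [measure_univ] at htop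
    have hlt : ENNReal.ofReal s < 1 := by
      rw [← ENNReal.ofReal_one]
      exact ENNReal.ofReal_lt_ofReal_iff_of_nonneg hs0.le |>.2 hs1
    obtain ⟨x, hx⟩ := (htop.eventually (eventually_gt_nhds hlt)).exists
    refine ⟨x, ?_⟩
    have : ENNReal.ofReal s ≤ P (Set.Iic x) := hx.le
    simpa [hS] using (ENNReal.ofReal_le_iff_le_toReal (measure_ne_top _ _)).1 this
  have h1 : ENNReal.ofReal s ≤ P (Set.Iic b) := aux_ge P s hne
  -- upper bound via Iio
  have hIio : Set.Iio b = ⋃ n : ℕ, Set.Iic (b - ((n : ℝ) + 1)⁻¹) := by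
    ext x
    simp only [Set.mem_Iio, Set.mem_iUnion, Set.mem_Iic]
    constructor
    · intro h
      obtain ⟨n, hn⟩ := exists_nat_one_div_lt (sub_pos.2 h)
      rw [one_div] at hn
      exact ⟨n, by linarith⟩
    · rintro ⟨n, hn⟩
      have hpos : (0 : ℝ) < ((n : ℝ) + 1)⁻¹ := by positivity
      linarith
  have hmono : Monotone fun n : ℕ => Set.Iic (b - ((n : ℝ) + 1)⁻¹) := by
    intro m n hmn
    refine Set.Iic_subset_Iic.2 ?_
    have : ((n : ℝ) + 1)⁻¹ ≤ ((m : ℝ) + 1)⁻¹ := by gcongr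
    linarith
  have hm2 := hmono.measure_iUnion (μ := P)
  rw [← hIio] at hm2
  have h2 : P (Set.Iio b) ≤ ENNReal.ofReal s := by
    rw [hm2]
    refine iSup_le fun n => ?_
    have hpos : (0 : ℝ) < ((n : ℝ) + 1)⁻¹ := by positivity
    have hnotS : b - ((n : ℝ) + 1)⁻¹ ∉ S := fun hmem =>
      absurd (csInf_le hbdd hmem) (by push_neg; linarith)
    have : (P (Set.Iic (b - ((n : ℝ) + 1)⁻¹))).toReal < s := by
      by_contra hge; push_neg at hge; exact hnotS hge
    calc P (Set.Iic (b - ((n : ℝ) + 1)⁻¹))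
        = ENNReal.ofReal (P (Set.Iic (b - ((n : ℝ) + 1)⁻¹))).toReal :=
          (ENNReal.ofReal_toReal (measure_ne_top _ _)).symm
      _ ≤ ENNReal.ofReal s := ENNReal.ofReal_le_ofReal this.le
  have h3 : P (Set.Iic b) = P (Set.Iio b) := (measure_congr (Iio_ae_eq_Iic (a := b))).symm
  exact le_antisymm (by rw [h3]; exact h2) h1
/-- mixture quantile bound.  For `P = Σ_k π_k P_k` with absolutely
continuous components and weights `π_k ≥ c > 0`, the gap of quantile-tail conditional
expectations upper-bounds `max_k E_{P_k}[V] − min_k E_{P_k}[V]`. -/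
theorem stmt4 {ι : Type*} [Fintype ι] [Nonempty ι]
    (c : ℝ) (hc : 0 < c)
    (π : ι → ℝ) (hπ : ∀ k, c ≤ π k) (hπsum : ∑ k, π k = 1)
    (Pk : ι → Measure ℝ) [∀ k, IsProbabilityMeasure (Pk k)]
    (hac : ∀ k, Pk k ≪ volume)
    (hint : ∀ k, Integrable id (Pk k))
    (P : Measure ℝ) (hP : P = ∑ k, ENNReal.ofReal (π k) • Pk k)
    (q : ℝ → ℝ)
    (hq : ∀ s, q s = sInf {p : ℝ | s ≤ (P (Set.Iic p)).toReal}) :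
    (⨆ k, ∫ v, v ∂(Pk k)) - (⨅ k, ∫ v, v ∂(Pk k))
      ≤ (∫ v in Set.Ici (q (1 - c)), v ∂P) / (P (Set.Ici (q (1 - c)))).toReal
        - (∫ v in Set.Iic (q c), v ∂P) / (P (Set.Iic (q c))).toReal := by
  classical
  have hπ0 : ∀ k, 0 ≤ π k := fun k => hc.le.trans (hπ k)
  have hPapp : ∀ s : Set ℝ, P s = ∑ k, ENNReal.ofReal (π k) * Pk k s := by
    intro s
    rw [hP, Measure.finset_sum_apply]
    simp [Measure.smul_apply, smul_eq_mul]
  have hPuniv : P Set.univ = 1 := by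
    rw [hPapp]
    simp only [measure_univ, mul_one]
    rw [← ENNReal.ofReal_sum_of_nonneg (fun k _ => hπ0 k), hπsum, ENNReal.ofReal_one]
  haveI hPprob : IsProbabilityMeasure P := ⟨hPuniv⟩
  have hPint : Integrable id P := by
    rw [hP]
    exact integrable_finset_sum_measure.2 fun k _ => (hint k).smul_measure ENNReal.ofReal_ne_top
  haveI : NullSingletonClass P := by
    constructor
    intro x
    rw [hPapp]
    have hz : ∀ k, Pk k {x} = 0 := fun k => (hac k) (measure_singleton x)
    simp [hz]
  have hcomp : ∀ k, (ENNReal.ofReal c • Pk k) ≤ P := by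
    intro k
    refine Measure.le_iff'.2 fun s => ?_
    rw [hPapp s]
    calc (ENNReal.ofReal c • Pk k) s = ENNReal.ofReal c * Pk k s := by
          simp [Measure.smul_apply, smul_eq_mul]
      _ ≤ ENNReal.ofReal (π k) * Pk k s :=
          mul_le_mul_left (ENNReal.ofReal_le_ofReal (hπ k)) _
      _ ≤ ∑ j, ENNReal.ofReal (π j) * Pk j s :=
          Finset.single_le_sum (f := fun j => ENNReal.ofReal (π j) * Pk j s)
            (fun j _ => zero_le) (Finset.mem_univ k)
  have hc1 : c ≤ 1 := by
    obtain ⟨k₀⟩ := (inferInstance : Nonempty ι)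
    have h := Finset.single_le_sum (f := π) (fun j _ => hπ0 j) (Finset.mem_univ k₀)
    rw [hπsum] at h
    linarith [hπ k₀]
  rcases lt_or_eq_of_le hc1 with hlt | heq
  · -- main case c < 1
    have hqb : P (Set.Iic (q c)) = ENNReal.ofReal c := by
      rw [hq c]; exact aux_quant P c hc hlt
    have hqa' : P (Set.Iic (q (1 - c))) = ENNReal.ofReal (1 - c) := by
      rw [hq (1 - c)]; exact aux_quant P (1 - c) (by linarith) (by linarith)
    have hqa : P (Set.Ici (q (1 - c))) = ENNReal.ofReal c := by
      have hIio : P (Set.Iio (q (1 - c))) = ENNReal.ofReal (1 - c) := by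
        rw [← hqa']; exact measure_congr Iio_ae_eq_Iic
      rw [← Set.compl_Iio, measure_compl measurableSet_Iio (measure_ne_top _ _), hIio, hPuniv]
      refine ENNReal.sub_eq_of_eq_add ENNReal.ofReal_ne_top ?_
      rw [← ENNReal.ofReal_add hc.le (by linarith)]
      norm_num
    have hA : (P (Set.Ici (q (1 - c)))).toReal = c := by
      rw [hqa, ENNReal.toReal_ofReal hc.le]
    have hB : (P (Set.Iic (q c))).toReal = c := by
      rw [hqb, ENNReal.toReal_ofReal hc.le]
    have hup : ∀ k, ∫ v, v ∂(Pk k) ≤ (∫ v in Set.Ici (q (1 - c)), v ∂P) / c := by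
      intro k
      have hmass : (ENNReal.ofReal c • Pk k) Set.univ = P (Set.Ici (q (1 - c))) := by
        simp [Measure.smul_apply, measure_univ, hqa]
      have h := aux_tail_upper P _ hPint _ (hcomp k) hmass
      rw [integral_smul_measure, ENNReal.toReal_ofReal hc.le, smul_eq_mul] at h
      rw [le_div_iff₀ hc]
      linarith
    have hlo : ∀ k, (∫ v in Set.Iic (q c), v ∂P) / c ≤ ∫ v, v ∂(Pk k) := by
      intro k
      have hmass : (ENNReal.ofReal c • Pk k) Set.univ = P (Set.Iic (q c)) := by
        simp [Measure.smul_apply, measure_univ, hqb]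
      have h := aux_tail_lower P _ hPint _ (hcomp k) hmass
      rw [integral_smul_measure, ENNReal.toReal_ofReal hc.le, smul_eq_mul] at h
      rw [div_le_iff₀ hc]
      linarith
    have hsup : (⨆ k, ∫ v, v ∂(Pk k)) ≤ (∫ v in Set.Ici (q (1 - c)), v ∂P) / c :=
      ciSup_le hup
    have hinf : (∫ v in Set.Iic (q c), v ∂P) / c ≤ ⨅ k, ∫ v, v ∂(Pk k) :=
      le_ciInf hlo
    rw [hA, hB]
    linarith
  · -- degenerate case c = 1
    subst heq
    haveI hsub : Subsingleton ι := by
      refine Fintype.card_le_one_iff_subsingleton.1 ?_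
      by_contra hgt
      push_neg at hgt
      have h2 : (2 : ℝ) ≤ (Fintype.card ι : ℝ) := by exact_mod_cast hgt
      have hsum : (Fintype.card ι : ℝ) ≤ ∑ i, π i := by
        calc (Fintype.card ι : ℝ) = ∑ _i : ι, (1 : ℝ) := by
              simp [Finset.sum_const, Finset.card_univ]
          _ ≤ ∑ i, π i := Finset.sum_le_sum fun i _ => hπ i
      rw [hπsum] at hsum
      linarith
    set k₀ : ι := Classical.arbitrary ι with hk₀
    haveI : Unique ι := uniqueOfSubsingleton k₀
    have hπk₀ : π k₀ = 1 := by
      have : ∑ i, π i = π k₀ := by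
        rw [Finset.univ_unique, Finset.sum_singleton]
        exact congrArg π (Subsingleton.elim _ _)
      rw [← this, hπsum]
    have hPeq : P = Pk k₀ := by
      rw [hP, Finset.univ_unique, Finset.sum_singleton]
      have : π default = 1 := by rw [Subsingleton.elim (default : ι) k₀, hπk₀]
      rw [show Pk default = Pk k₀ from congrArg Pk (Subsingleton.elim _ _), this,
        ENNReal.ofReal_one, one_smul]
    have hsupeq : (⨆ k, ∫ v, v ∂(Pk k)) = ∫ v, v ∂(Pk k₀) :=
      le_antisymm (ciSup_le fun k => le_of_eq (by rw [Subsingleton.elim k k₀]))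
        (le_ciSup (f := fun k => ∫ v, v ∂(Pk k)) (Finite.bddAbove_range _) k₀)
    have hinfeq : (⨅ k, ∫ v, v ∂(Pk k)) = ∫ v, v ∂(Pk k₀) :=
      le_antisymm (ciInf_le (f := fun k => ∫ v, v ∂(Pk k)) (Finite.bddBelow_range _) k₀)
        (le_ciInf fun k => le_of_eq (by rw [Subsingleton.elim k k₀]))
    rw [hsupeq, hinfeq, sub_self, sub_self]
    -- goal : 0 ≤ T₊ - T₋ with thresholds q 0 and q 1
    have hq0 : q 0 = 0 := by
      rw [hq 0]
      have : {p : ℝ | (0 : ℝ) ≤ (P (Set.Iic p)).toReal} = Set.univ :=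
        Set.eq_univ_of_forall fun p => ENNReal.toReal_nonneg
      rw [this]
      exact Real.sInf_of_not_bddBelow not_bddBelow_univ
    rw [hq0]
    set E := ∫ v, v ∂P with hE
    by_cases hS₁ : {p : ℝ | (1 : ℝ) ≤ (P (Set.Iic p)).toReal}.Nonempty
    · have h1 : ENNReal.ofReal 1 ≤ P (Set.Iic (q 1)) := by
        rw [hq 1]; exact aux_ge P 1 hS₁
      have hfull : P (Set.Iic (q 1)) = 1 :=
        le_antisymm prob_le_one (by simpa using h1)
      have hTm : ∫ v in Set.Iic (q 1), v ∂P = E := by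
        rw [hE, Measure.restrict_eq_self_of_ae_mem]
        refine mem_ae_iff.2 ?_
        show P (Set.Iic (q 1))ᶜ = 0
        rw [measure_compl measurableSet_Iic (measure_ne_top _ _), hfull, hPuniv, tsub_self]
      have hBfull : (P (Set.Iic (q 1))).toReal = 1 := by rw [hfull, ENNReal.toReal_one]
      rw [hTm, hBfull, div_one]
      by_cases hA0 : P (Set.Ici (0 : ℝ)) = 0
      · have hT : ∫ v in Set.Ici (0 : ℝ), v ∂P = 0 := by
          rw [Measure.restrict_eq_zero.2 hA0, integral_zero_measure]
        have hEle : E ≤ 0 := by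
          refine integral_nonpos_of_ae ?_
          have hae : ∀ᵐ v ∂P, v ∈ (Set.Ici (0 : ℝ))ᶜ := by
            refine mem_ae_iff.2 ?_
            show P (Set.Ici (0 : ℝ))ᶜᶜ = 0
            rwa [compl_compl]
          filter_upwards [hae] with v hv
          exact le_of_lt (by simpa [Set.mem_compl_iff, Set.mem_Ici, not_le] using hv)
        rw [hT, zero_div]
        linarith
      · have hApos : 0 < (P (Set.Ici (0 : ℝ))).toReal :=
          ENNReal.toReal_pos hA0 (measure_ne_top _ _)
        have hle : (P (Set.Ici (0 : ℝ)) • P) ≤ P := by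
          refine Measure.le_iff'.2 fun s => ?_
          simp only [Measure.smul_apply, smul_eq_mul]
          calc P (Set.Ici (0 : ℝ)) * P s ≤ 1 * P s :=
                mul_le_mul_left prob_le_one _
            _ = P s := one_mul _
        have hmass : (P (Set.Ici (0 : ℝ)) • P) Set.univ = P (Set.Ici (0 : ℝ)) := by
          simp [Measure.smul_apply, hPuniv]
        have h := aux_tail_upper P _ hPint 0 hle hmass
        rw [integral_smul_measure, smul_eq_mul] at h
        rw [le_sub_iff_add_le, zero_add, le_div_iff₀ hApos]
        rw [← hE] at h
        linarith [h]
    · have hq1 : q 1 = 0 := by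
        rw [hq 1, Set.not_nonempty_iff_eq_empty.1 hS₁, Real.sInf_empty]
      rw [hq1]
      have hnum1 : 0 ≤ ∫ v in Set.Ici (0 : ℝ), v ∂P :=
        setIntegral_nonneg measurableSet_Ici fun v hv => hv
      have hnum2 : ∫ v in Set.Iic (0 : ℝ), v ∂P ≤ 0 :=
        setIntegral_nonpos measurableSet_Iic fun v hv => hv
      have d1 : 0 ≤ (∫ v in Set.Ici (0 : ℝ), v ∂P) / (P (Set.Ici (0 : ℝ))).toReal :=
        div_nonneg hnum1 ENNReal.toReal_nonneg
      have d2 : (∫ v in Set.Iic (0 : ℝ), v ∂P) / (P (Set.Iic (0 : ℝ))).toReal ≤ 0 :=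
        div_nonpos_of_nonpos_of_nonneg hnum2 ENNReal.toReal_nonneg
      linarith
end

section
/- Let 𝒴 be a finite set and P_Y a distribution on 𝒴 with P_Y(y) > 0 for all y. Among all weight functions w: 𝒴 → ℝ₊ with Σ_y w(y)P_Y(y) = 1, the function w*(y) = 1/(|𝒴| P_Y(y)) minimizes sup over all distributions Q_Y on 𝒴 of TV(P^w_Y, Q_Y), and the minimal value equals (|𝒴|−1)/|𝒴|. -/
/-- Worst-case total variation distance of the reweighted label distribution
`P^w_Y(y) = w(y)p(y)` against an arbitrary distribution `q` on a finite set. -/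
noncomputable def worstTV {𝒴 : Type*} [Fintype 𝒴] (p w : 𝒴 → ℝ) : ℝ :=
  ⨆ q : {q : 𝒴 → ℝ // (∀ y, 0 ≤ q y) ∧ ∑ y, q y = 1},
    (1 / 2) * ∑ y, |w y * p y - q.1 y|

open Finset in
lemma worstTV_eq {𝒴 : Type*} [Fintype 𝒴] [Nonempty 𝒴] (p w : 𝒴 → ℝ)
    (ha : ∀ y, 0 ≤ w y * p y) (hs : ∑ y, w y * p y = 1) :
    worstTV p w = 1 - univ.inf' univ_nonempty (fun y => w y * p y) := by
  classical
  set a : 𝒴 → ℝ := fun y => w y * p y with hadef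
  have key : ∀ q : {q : 𝒴 → ℝ // (∀ y, 0 ≤ q y) ∧ ∑ y, q y = 1},
      (1 / 2) * ∑ y, |a y - q.1 y| = 1 - ∑ y, min (a y) (q.1 y) := by
    intro q
    have h1 : ∀ y, |a y - q.1 y| = a y + q.1 y - 2 * min (a y) (q.1 y) := by
      intro y; rcases le_total (a y) (q.1 y) with h | h
      · rw [min_eq_left h, abs_of_nonpos (by linarith)]; ring
      · rw [min_eq_right h, abs_of_nonneg (by linarith)]; ring
    simp_rw [h1]
    rw [Finset.sum_sub_distrib, Finset.sum_add_distrib, hs, q.2.2, ← Finset.mul_sum]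
    ring
  have upper : ∀ q : {q : 𝒴 → ℝ // (∀ y, 0 ≤ q y) ∧ ∑ y, q y = 1},
      (1 / 2) * ∑ y, |a y - q.1 y| ≤ 1 - univ.inf' univ_nonempty a := by
    intro q
    rw [key q]
    have hex : ∃ y, a y ≤ q.1 y := by
      by_contra hcon
      push_neg at hcon
      have : ∑ y, q.1 y < ∑ y, a y :=
        Finset.sum_lt_sum_of_nonempty univ_nonempty (fun y _ => hcon y)
      rw [hs, q.2.2] at this; linarith
    obtain ⟨y1, hy1⟩ := hex
    have h2 : univ.inf' univ_nonempty a ≤ ∑ y, min (a y) (q.1 y) := by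
      calc univ.inf' univ_nonempty a ≤ a y1 := Finset.inf'_le _ (mem_univ y1)
        _ = min (a y1) (q.1 y1) := (min_eq_left hy1).symm
        _ ≤ ∑ y, min (a y) (q.1 y) :=
          Finset.single_le_sum (fun y _ => le_min (ha y) (q.2.1 y)) (mem_univ y1)
    linarith
  obtain ⟨y0, -, hy0⟩ := Finset.exists_mem_eq_inf' (univ_nonempty (α := 𝒴)) a
  set q0 : 𝒴 → ℝ := fun y => if y = y0 then 1 else 0 with hq0
  have hq0nn : ∀ y, 0 ≤ q0 y := by intro y; simp only [hq0]; positivity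
  have hq0sum : ∑ y, q0 y = 1 := by simp [hq0]
  have hay0 : a y0 ≤ 1 := by
    rw [← hs]
    exact Finset.single_le_sum (fun y _ => ha y) (mem_univ y0)
  have hmin : ∀ y, min (a y) (q0 y) = if y = y0 then a y0 else 0 := by
    intro y
    simp only [hq0]
    split
    · next h => rw [h]; exact min_eq_left hay0
    · exact min_eq_right (ha y)
  have hval : (1 / 2) * ∑ y, |a y - q0 y| = 1 - univ.inf' univ_nonempty a := by
    rw [key ⟨q0, hq0nn, hq0sum⟩]
    simp_rw [hmin]
    rw [Finset.sum_ite_eq' univ y0 (fun _ => a y0)]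
    simp [hy0]
  have hbdd : BddAbove (Set.range (fun q : {q : 𝒴 → ℝ // (∀ y, 0 ≤ q y) ∧ ∑ y, q y = 1} =>
      (1 / 2) * ∑ y, |a y - q.1 y|)) := by
    refine ⟨1 - univ.inf' univ_nonempty a, ?_⟩
    rintro x ⟨q, rfl⟩
    exact upper q
  haveI : Nonempty {q : 𝒴 → ℝ // (∀ y, 0 ≤ q y) ∧ ∑ y, q y = 1} := ⟨⟨q0, hq0nn, hq0sum⟩⟩
  refine le_antisymm (ciSup_le upper) ?_
  calc 1 - univ.inf' univ_nonempty a = (1 / 2) * ∑ y, |a y - q0 y| := hval.symm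
    _ ≤ worstTV p w := le_ciSup hbdd ⟨q0, hq0nn, hq0sum⟩

open Finset in
/-- `w*(y) = 1/(|𝒴| P_Y(y))` minimizes the worst-case total variation
distance `sup_Q TV(P^w_Y, Q)` over all admissible weights `w`, and the minimal
value equals `(|𝒴|−1)/|𝒴|`. -/
theorem stmt7 {𝒴 : Type*} [Fintype 𝒴] [Nonempty 𝒴]
    (p : 𝒴 → ℝ) (hp : ∀ y, 0 < p y) (hpsum : ∑ y, p y = 1) :
    (∀ w : 𝒴 → ℝ, (∀ y, 0 ≤ w y) → (∑ y, w y * p y = 1) →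
        worstTV p (fun y => 1 / (Fintype.card 𝒴 * p y)) ≤ worstTV p w)
    ∧ worstTV p (fun y => 1 / (Fintype.card 𝒴 * p y))
        = ((Fintype.card 𝒴 : ℝ) - 1) / Fintype.card 𝒴 := by
  have hcard : (0 : ℝ) < Fintype.card 𝒴 := by
    exact_mod_cast Fintype.card_pos
  have hstar : ∀ y, (1 / (Fintype.card 𝒴 * p y)) * p y = 1 / Fintype.card 𝒴 := by
    intro y
    field_simp
    exact div_self (hp y).ne'
  have hstar_nn : ∀ y, 0 ≤ (1 / (Fintype.card 𝒴 * p y)) * p y := by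
    intro y; rw [hstar]; positivity
  have hstar_sum : ∑ y, (1 / (Fintype.card 𝒴 * p y)) * p y = 1 := by
    simp_rw [hstar]
    rw [Finset.sum_const, card_univ, nsmul_eq_mul]
    field_simp
  have hstar_eq : worstTV p (fun y => 1 / (Fintype.card 𝒴 * p y))
      = ((Fintype.card 𝒴 : ℝ) - 1) / Fintype.card 𝒴 := by
    rw [worstTV_eq p _ hstar_nn hstar_sum]
    have : (univ.inf' univ_nonempty fun y =>
        (1 / (Fintype.card 𝒴 * p y)) * p y) = 1 / Fintype.card 𝒴 := by
      simp_rw [hstar]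
      exact Finset.inf'_const _ _
    rw [this]
    field_simp
  refine ⟨fun w hw hwsum => ?_, hstar_eq⟩
  have hwnn : ∀ y, 0 ≤ w y * p y := fun y => mul_nonneg (hw y) (hp y).le
  rw [hstar_eq, worstTV_eq p w hwnn hwsum]
  have hmin : univ.inf' univ_nonempty (fun y => w y * p y) ≤ 1 / Fintype.card 𝒴 := by
    by_contra hcon
    push_neg at hcon
    have : ∑ _y : 𝒴, (1 / (Fintype.card 𝒴 : ℝ)) < ∑ y, w y * p y := by
      apply Finset.sum_lt_sum_of_nonempty univ_nonempty
      intro y _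
      exact lt_of_lt_of_le hcon (Finset.inf'_le _ (mem_univ y))
    rw [hwsum, Finset.sum_const, card_univ, nsmul_eq_mul] at this
    rw [mul_one_div, div_self (ne_of_gt hcard)] at this
    linarith
  have : ((Fintype.card 𝒴 : ℝ) - 1) / Fintype.card 𝒴 = 1 - 1 / Fintype.card 𝒴 := by
    field_simp
  rw [this]
  linarith
end
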